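/- For every integer n ≥ 4, 2·(2n − 5) · ∑_T Ear(T) = n·(n − 1) · C_{n−2}, the sum ranging over all triangulations T of P_n; equivalently, the expected number of ears of a uniformly random triangulation of P_n is n(n−1)/(2(2n−5)). -/

import Mathlib

open Finset
open scoped Classical

/-- `IsDiag l r i j` : the pair `{i, j}` (written with `i < j`) is a diagonal of the
convex sub-polygon on vertices `{l, …, r}`. -/
def IsDiag (l r i j : ℕ) : Prop :=
  l ≤ i ∧ i + 2 ≤ j ∧ j ≤ r ∧ ¬(i = l ∧ j = r)

/-- Two diagonals `{a, b}` and `{c, d}` (written with `a < b`, `c < d`) cross. -/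
def Crosses (a b c d : ℕ) : Prop :=
  (a < c ∧ c < b ∧ b < d) ∨ (c < a ∧ a < d ∧ d < b)

/-- All diagonals of the sub-polygon on `{l, …, r}`, as ordered pairs. -/
noncomputable def allDiags (l r : ℕ) : Finset (ℕ × ℕ) :=
  (range (r + 1) ×ˢ range (r + 1)).filter fun p => IsDiag l r p.1 p.2

/-- The triangulations of the sub-polygon on `{l, …, r}` : sets of `r - l - 2`
pairwise noncrossing diagonals. -/
noncomputable def triangulations (l r : ℕ) : Finset (Finset (ℕ × ℕ)) :=
  (allDiags l r).powerset.filter fun T =>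
    T.card = r - l - 2 ∧ ∀ d ∈ T, ∀ e ∈ T, ¬ Crosses d.1 d.2 e.1 e.2

/-- `IsEdge l r i j` : the pair `{i, j}` (with `i < j`) is an edge (boundary side) of the
sub-polygon on `{l, …, r}`. -/
def IsEdge (l r i j : ℕ) : Prop :=
  (l ≤ i ∧ j = i + 1 ∧ j ≤ r) ∨ (i = l ∧ j = r)

/-- `{i, j}` is a side available in the triangulation `T` (an edge of the polygon or a
diagonal of `T`). -/
def IsSide (l r : ℕ) (T : Finset (ℕ × ℕ)) (i j : ℕ) : Prop :=
  IsEdge l r i j ∨ (i, j) ∈ T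

/-- The triangles of a triangulation `T` of the sub-polygon on `{l, …, r}`, as ordered
triples `(a, b, c)` with `a < b < c`, each of whose three sides is an edge or a diagonal
of `T`. -/
noncomputable def triangles (l r : ℕ) (T : Finset (ℕ × ℕ)) : Finset (ℕ × ℕ × ℕ) :=
  (range (r + 1) ×ˢ range (r + 1) ×ˢ range (r + 1)).filter fun t =>
    t.1 < t.2.1 ∧ t.2.1 < t.2.2 ∧
      IsSide l r T t.1 t.2.1 ∧ IsSide l r T t.2.1 t.2.2 ∧ IsSide l r T t.1 t.2.2

/-- The number of sides of the triangle `{a, b, c}` (with `a < b < c`) that are edges of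
the sub-polygon on `{l, …, r}`. -/
noncomputable def edgeCount (l r a b c : ℕ) : ℕ :=
  (if IsEdge l r a b then 1 else 0) + (if IsEdge l r b c then 1 else 0) +
    (if IsEdge l r a c then 1 else 0)

/-- `O(T)` : the number of triangles of `T` with exactly one side an edge of `P_n`. -/
noncomputable def oneSideCount (n : ℕ) (T : Finset (ℕ × ℕ)) : ℕ :=
  ((triangles 1 n T).filter fun t => edgeCount 1 n t.1 t.2.1 t.2.2 = 1).card

/-- `Ear(T)` : the number of triangles of `T` with at least two sides edges of `P_n`. -/
noncomputable def earCount (n : ℕ) (T : Finset (ℕ × ℕ)) : ℕ :=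
  ((triangles 1 n T).filter fun t => 2 ≤ edgeCount 1 n t.1 t.2.1 t.2.2).card

/-- `D(T)` : the number of triangles of `T` containing vertex `1`. -/
noncomputable def degOne (n : ℕ) (T : Finset (ℕ × ℕ)) : ℕ :=
  ((triangles 1 n T).filter fun t => t.1 = 1 ∨ t.2.1 = 1 ∨ t.2.2 = 1).card

/-- `B(T)` : the number of triangles `{l, j, r}` of `T` (with `l < j < r`) such that
`j - l = 1`. -/
noncomputable def blueCount (n : ℕ) (T : Finset (ℕ × ℕ)) : ℕ :=
  ((triangles 1 n T).filter fun t => t.2.1 - t.1 = 1).card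

/-- `A_i(T)` : the number of triangles `{1, a, b}` of `T` containing vertex `1`
(written with `1 < a < b`) such that `b - a = i`. -/
noncomputable def angleCount (n : ℕ) (T : Finset (ℕ × ℕ)) (i : ℕ) : ℕ :=
  ((triangles 1 n T).filter fun t => t.1 = 1 ∧ t.2.2 - t.2.1 = i).card


lemma crosses_symm {a b c d : ℕ} : Crosses a b c d ↔ Crosses c d a b := by
  unfold Crosses; tauto

lemma mem_triangulations {l r : ℕ} {T : Finset (ℕ × ℕ)} :
    T ∈ triangulations l r ↔
      (∀ p ∈ T, IsDiag l r p.1 p.2) ∧ T.card = r - l - 2 ∧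
        ∀ p ∈ T, ∀ q ∈ T, ¬ Crosses p.1 p.2 q.1 q.2 := by
  unfold triangulations allDiags
  simp only [Finset.mem_filter, Finset.mem_powerset, Finset.subset_iff]
  constructor
  · rintro ⟨hsub, hcard, hnc⟩
    exact ⟨fun p hp => (hsub hp).2, hcard, hnc⟩
  · rintro ⟨hd, hcard, hnc⟩
    refine ⟨fun {p} hp => ?_, hcard, hnc⟩
    obtain ⟨h1, h2, h3, h4⟩ := hd p hp
    simp only [Finset.mem_filter, Finset.mem_product, Finset.mem_range]
    exact ⟨⟨by omega, by omega⟩, h1, h2, h3, h4⟩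

def delv (v i : ℕ) : ℕ := if i < v then i else i - 1

def liftv (v i : ℕ) : ℕ := if i < v then i else i + 1

lemma isDiag_delv {l r v c d : ℕ} (hv1 : l < v) (hv2 : v < r)
    (h : IsDiag l r c d) (hc : c ≠ v) (hd : d ≠ v)
    (hgap : ¬(c < v ∧ v < d ∧ d = c + 2)) :
    IsDiag l (r - 1) (delv v c) (delv v d) := by
  obtain ⟨h1, h2, h3, h4⟩ := h
  unfold delv IsDiag
  split <;> split <;> omega

lemma crosses_delv {v a b c d : ℕ} (ha : a ≠ v) (hb : b ≠ v) (hc : c ≠ v) (hd : d ≠ v) :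
    Crosses (delv v a) (delv v b) (delv v c) (delv v d) ↔ Crosses a b c d := by
  unfold Crosses delv
  split <;> split <;> split <;> split <;> omega

lemma delv_inj {v a b : ℕ} (ha : a ≠ v) (hb : b ≠ v) (h : delv v a = delv v b) : a = b := by
  unfold delv at h; split at h <;> split at h <;> omega

lemma noncross_card_le (l : ℕ) : ∀ r, ∀ S : Finset (ℕ × ℕ),
    (∀ p ∈ S, IsDiag l r p.1 p.2) →
    (∀ p ∈ S, ∀ q ∈ S, ¬ Crosses p.1 p.2 q.1 q.2) → S.card ≤ r - l - 2 := by
  intro r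
  induction r using Nat.strong_induction_on with
  | _ r IH =>
    intro S hdiag hnc
    rcases S.eq_empty_or_nonempty with rfl | hne
    · simp
    obtain ⟨ab, habS, hmin⟩ := S.exists_min_image (fun p => p.2 - p.1) hne
    obtain ⟨hl, hgap, hr, hex⟩ := hdiag ab habS
    set a := ab.1 with ha
    set b := ab.2 with hb
    -- no other diagonal has an endpoint strictly between a and b
    have hclean : ∀ p ∈ S, p ≠ ab → ¬(a < p.1 ∧ p.1 < b) ∧ ¬(a < p.2 ∧ p.2 < b) := by
      intro p hp hpne
      obtain ⟨q1, q2, q3, q4⟩ := hdiag p hp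
      have hm := hmin p hp
      have hcr := hnc ab habS p hp
      have hcr2 := hnc p hp ab habS
      unfold Crosses at hcr hcr2
      constructor
      · rintro ⟨u1, u2⟩
        rcases le_or_gt p.2 b with h5 | h5
        · omega
        · exact hcr (Or.inl ⟨u1, u2, h5⟩)
      · rintro ⟨u1, u2⟩
        rcases le_or_gt a p.1 with h5 | h5
        · omega
        · exact hcr (Or.inr ⟨h5, u1, u2⟩)
    have hrl : l + 3 ≤ r := by
      rcases Nat.lt_or_ge (b - a) 3 with hba | hba
      · -- b = a + 2, so the exclusion forces r > a + 2 or l < a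
        omega
      · omega
    -- the set to contract
    have havoid : ∀ p ∈ S, p ≠ ab → p.1 ≠ a + 1 ∧ p.2 ≠ a + 1 := by
      intro p hp hpne
      have h1 := hclean p hp hpne
      have h2 := (hdiag p hp)
      constructor
      · intro h; exact h1.1 ⟨by omega, by omega⟩
      · intro h; exact h1.2 ⟨by omega, by omega⟩
    set v := a + 1 with hv
    by_cases hba : b = a + 2
    · -- remove ab, contract v
      set S0 := S.erase ab with hS0
      have havoid0 : ∀ p ∈ S0, p.1 ≠ v ∧ p.2 ≠ v := by
        intro p hp
        exact havoid p (S.mem_of_mem_erase hp) (Finset.ne_of_mem_erase hp)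
      have hgap0 : ∀ p ∈ S0, ¬(p.1 < v ∧ v < p.2 ∧ p.2 = p.1 + 2) := by
        intro p hp hcon
        have h1 := hclean p (S.mem_of_mem_erase hp) (Finset.ne_of_mem_erase hp)
        have hne' := Finset.ne_of_mem_erase hp
        have : p.1 = a ∧ p.2 = b := by
          constructor <;> omega
        exact hne' (Prod.ext this.1 this.2)
      set S1 := S0.image (fun p => (delv v p.1, delv v p.2)) with hS1
      have hcard1 : S1.card = S0.card := by
        apply Finset.card_image_of_injOn
        intro p hp q hq hpq
        have h1 := havoid0 p hp
        have h2 := havoid0 q hq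
        have e1 : delv v p.1 = delv v q.1 := congrArg Prod.fst hpq
        have e2 : delv v p.2 = delv v q.2 := congrArg Prod.snd hpq
        exact Prod.ext (delv_inj h1.1 h2.1 e1) (delv_inj h1.2 h2.2 e2)
      have hd1 : ∀ p ∈ S1, IsDiag l (r - 1) p.1 p.2 := by
        intro p hp
        obtain ⟨q, hq, rfl⟩ := Finset.mem_image.1 hp
        exact isDiag_delv (by omega) (by omega) (hdiag q (S.mem_of_mem_erase hq))
          (havoid0 q hq).1 (havoid0 q hq).2 (hgap0 q hq)
      have hnc1 : ∀ p ∈ S1, ∀ q ∈ S1, ¬ Crosses p.1 p.2 q.1 q.2 := by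
        intro p hp q hq
        obtain ⟨p', hp', rfl⟩ := Finset.mem_image.1 hp
        obtain ⟨q', hq', rfl⟩ := Finset.mem_image.1 hq
        rw [crosses_delv (havoid0 p' hp').1 (havoid0 p' hp').2
          (havoid0 q' hq').1 (havoid0 q' hq').2]
        exact hnc p' (S.mem_of_mem_erase hp') q' (S.mem_of_mem_erase hq')
      have := IH (r - 1) (by omega) S1 hd1 hnc1
      have hec : S0.card = S.card - 1 := Finset.card_erase_of_mem habS
      have hSpos : 0 < S.card := Finset.card_pos.2 hne
      omega
    · -- keep everything, contract v
      have havoid0 : ∀ p ∈ S, p.1 ≠ v ∧ p.2 ≠ v := by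
        intro p hp
        by_cases hpe : p = ab
        · subst hpe; constructor <;> omega
        · exact havoid p hp hpe
      have hgap0 : ∀ p ∈ S, ¬(p.1 < v ∧ v < p.2 ∧ p.2 = p.1 + 2) := by
        intro p hp hcon
        have hm := hmin p hp
        omega
      set S1 := S.image (fun p => (delv v p.1, delv v p.2)) with hS1
      have hcard1 : S1.card = S.card := by
        apply Finset.card_image_of_injOn
        intro p hp q hq hpq
        have h1 := havoid0 p hp
        have h2 := havoid0 q hq
        have e1 : delv v p.1 = delv v q.1 := congrArg Prod.fst hpq
        have e2 : delv v p.2 = delv v q.2 := congrArg Prod.snd hpq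
        exact Prod.ext (delv_inj h1.1 h2.1 e1) (delv_inj h1.2 h2.2 e2)
      have hd1 : ∀ p ∈ S1, IsDiag l (r - 1) p.1 p.2 := by
        intro p hp
        obtain ⟨q, hq, rfl⟩ := Finset.mem_image.1 hp
        exact isDiag_delv (by omega) (by omega) (hdiag q hq)
          (havoid0 q hq).1 (havoid0 q hq).2 (hgap0 q hq)
      have hnc1 : ∀ p ∈ S1, ∀ q ∈ S1, ¬ Crosses p.1 p.2 q.1 q.2 := by
        intro p hp q hq
        obtain ⟨p', hp', rfl⟩ := Finset.mem_image.1 hp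
        obtain ⟨q', hq', rfl⟩ := Finset.mem_image.1 hq
        rw [crosses_delv (havoid0 p' hp').1 (havoid0 p' hp').2
          (havoid0 q' hq').1 (havoid0 q' hq').2]
        exact hnc p' hp' q' hq'
      have := IH (r - 1) (by omega) S1 hd1 hnc1
      omega

lemma apex_exists {l r : ℕ} {T : Finset (ℕ × ℕ)} (hT : T ∈ triangulations l r)
    (hlr : l + 2 ≤ r) :
    ∃ j, l < j ∧ j < r ∧ (j = l + 1 ∨ (l, j) ∈ T) ∧ (r = j + 1 ∨ (j, r) ∈ T) := by
  obtain ⟨hdiag, hcard, hnc⟩ := mem_triangulations.1 hT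
  set J := (range (r + 1)).filter (fun j => (l, j) ∈ T) with hJ
  by_cases hJne : J.Nonempty
  · obtain ⟨j, hjmem, hjmax0⟩ := J.exists_max_image id hJne
    have hjT : (l, j) ∈ T := (Finset.mem_filter.1 hjmem).2
    have hjmax : ∀ d, (l, d) ∈ T → d ≤ j := by
      intro d hd
      obtain ⟨w1, w2, w3, w4⟩ := hdiag (l, d) hd
      refine hjmax0 d ?_
      simp only [hJ, Finset.mem_filter, Finset.mem_range]
      exact ⟨by simp at w3 ⊢; omega, hd⟩
    obtain ⟨e1, e2, e3, e4⟩ := hdiag (l, j) hjT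
    dsimp only at e1 e2 e3 e4
    refine ⟨j, by omega, by omega, Or.inr hjT, ?_⟩
    by_contra hcon
    push_neg at hcon
    obtain ⟨hrj, hjrT⟩ := hcon
    -- add the diagonal (j, r) : contradiction with maximality of noncrossing sets
    have hjr_diag : IsDiag l r j r := ⟨by omega, by omega, le_refl _, by omega⟩
    have hnocross : ∀ p ∈ T, ¬ Crosses j r p.1 p.2 := by
      intro p hp hcr
      obtain ⟨q1, q2, q3, q4⟩ := hdiag p hp
      unfold Crosses at hcr
      rcases hcr with ⟨u1, u2, u3⟩ | ⟨u1, u2, u3⟩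
      · omega
      · -- p.1 < j < p.2 < r
        rcases Nat.eq_or_lt_of_le q1 with hq | hq
        · exact absurd (hjmax p.2 (by rwa [show l = p.1 from by omega, Prod.mk.eta])) (by omega)
        · exact hnc (l, j) hjT p hp (Or.inl ⟨by omega, by omega, by omega⟩)
    have hnew : ∀ p ∈ insert (j, r) T, IsDiag l r p.1 p.2 := by
      intro p hp
      rcases Finset.mem_insert.1 hp with rfl | hp
      · exact hjr_diag
      · exact hdiag p hp
    have hnewnc : ∀ p ∈ insert (j, r) T, ∀ q ∈ insert (j, r) T,
        ¬ Crosses p.1 p.2 q.1 q.2 := by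
      intro p hp q hq
      rcases Finset.mem_insert.1 hp with rfl | hp <;> rcases Finset.mem_insert.1 hq with rfl | hq
      · unfold Crosses; omega
      · exact hnocross q hq
      · rw [crosses_symm]; exact hnocross p hp
      · exact hnc p hp q hq
    have hle := noncross_card_le l r _ hnew hnewnc
    rw [Finset.card_insert_of_notMem hjrT] at hle
    omega
  · refine ⟨l + 1, by omega, by omega, Or.inl rfl, ?_⟩
    by_contra hcon
    push_neg at hcon
    obtain ⟨hrj, hjrT⟩ := hcon
    have hjr_diag : IsDiag l r (l + 1) r := ⟨by omega, by omega, le_refl _, by omega⟩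
    have hnocross : ∀ p ∈ T, ¬ Crosses (l + 1) r p.1 p.2 := by
      intro p hp hcr
      obtain ⟨q1, q2, q3, q4⟩ := hdiag p hp
      unfold Crosses at hcr
      rcases hcr with ⟨u1, u2, u3⟩ | ⟨u1, u2, u3⟩
      · omega
      · have hq : p.1 = l := by omega
        apply hJne
        refine ⟨p.2, ?_⟩
        simp only [hJ, Finset.mem_filter, Finset.mem_range]
        exact ⟨by omega, by rwa [show l = p.1 from by omega, Prod.mk.eta]⟩
    have hnew : ∀ p ∈ insert (l + 1, r) T, IsDiag l r p.1 p.2 := by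
      intro p hp
      rcases Finset.mem_insert.1 hp with rfl | hp
      · exact hjr_diag
      · exact hdiag p hp
    have hnewnc : ∀ p ∈ insert (l + 1, r) T, ∀ q ∈ insert (l + 1, r) T,
        ¬ Crosses p.1 p.2 q.1 q.2 := by
      intro p hp q hq
      rcases Finset.mem_insert.1 hp with rfl | hp <;> rcases Finset.mem_insert.1 hq with rfl | hq
      · unfold Crosses; omega
      · exact hnocross q hq
      · rw [crosses_symm]; exact hnocross p hp
      · exact hnc p hp q hq
    have hle := noncross_card_le l r _ hnew hnewnc
    have hnotmem : (l + 1, r) ∉ T := hjrT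
    rw [Finset.card_insert_of_notMem hnotmem] at hle
    omega

lemma crosses_iff {a b c d : ℕ} :
    Crosses a b c d ↔ ((a < c ∧ c < b ∧ b < d) ∨ (c < a ∧ a < d ∧ d < b)) := Iff.rfl

lemma conns_mem {l r j : ℕ} (p : ℕ × ℕ) :
    p ∈ ((if l + 1 < j then ({(l, j)} : Finset (ℕ × ℕ)) else ∅) ∪
        (if j + 1 < r then {(j, r)} else ∅)) ↔
      ((l + 1 < j ∧ p = (l, j)) ∨ (j + 1 < r ∧ p = (j, r))) := by
  by_cases h₁ : l + 1 < j <;> by_cases h₂ : j + 1 < r <;> simp [h₁, h₂]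

lemma no_straddle {l r j : ℕ} {T : Finset (ℕ × ℕ)} (hlj : l < j) (hjr : j < r)
    (hT : T ∈ triangulations l r)
    (ha1 : j = l + 1 ∨ (l, j) ∈ T) (ha2 : r = j + 1 ∨ (j, r) ∈ T) :
    ∀ p ∈ T, p.2 ≤ j ∨ j ≤ p.1 := by
  obtain ⟨hdiag, hcard, hnc⟩ := mem_triangulations.1 hT
  intro p hp
  by_contra hcon
  push_neg at hcon
  obtain ⟨h1, h2⟩ := hcon
  obtain ⟨q1, q2, q3, q4⟩ := hdiag p hp
  rcases Nat.eq_or_lt_of_le q1 with hq | hq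
  · rcases ha2 with h | h
    · omega
    · refine hnc (j, r) h p hp ?_
      show Crosses j r p.1 p.2
      exact Or.inr ⟨by omega, by omega, by omega⟩
  · rcases ha1 with h | h
    · omega
    · refine hnc (l, j) h p hp ?_
      show Crosses l j p.1 p.2
      exact Or.inl ⟨by omega, by omega, by omega⟩

lemma split_mem {l r j : ℕ} {T : Finset (ℕ × ℕ)} (hlj : l < j) (hjr : j < r)
    (hT : T ∈ triangulations l r)
    (ha1 : j = l + 1 ∨ (l, j) ∈ T) (ha2 : r = j + 1 ∨ (j, r) ∈ T) :
    T.filter (fun p => p.2 ≤ j ∧ ¬(p.1 = l ∧ p.2 = j)) ∈ triangulations l j ∧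
    T.filter (fun p => j ≤ p.1 ∧ ¬(p.1 = j ∧ p.2 = r)) ∈ triangulations j r ∧
    T.filter (fun p => p.2 ≤ j ∧ ¬(p.1 = l ∧ p.2 = j)) ∪
      (T.filter (fun p => j ≤ p.1 ∧ ¬(p.1 = j ∧ p.2 = r)) ∪
      ((if l + 1 < j then {(l, j)} else ∅) ∪ (if j + 1 < r then {(j, r)} else ∅))) = T := by
  obtain ⟨hdiag, hcard, hnc⟩ := mem_triangulations.1 hT
  have hstr := no_straddle hlj hjr hT ha1 ha2
  have hljT : l + 1 < j → (l, j) ∈ T := fun h => ha1.resolve_left (by omega)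
  have hjrT : j + 1 < r → (j, r) ∈ T := fun h => ha2.resolve_left (by omega)
  set A := T.filter (fun p => p.2 ≤ j ∧ ¬(p.1 = l ∧ p.2 = j)) with hA
  set B := T.filter (fun p => j ≤ p.1 ∧ ¬(p.1 = j ∧ p.2 = r)) with hB
  set C := ((if l + 1 < j then ({(l, j)} : Finset (ℕ × ℕ)) else ∅) ∪
      (if j + 1 < r then {(j, r)} else ∅)) with hC
  have hAmem : ∀ p, p ∈ A ↔ p ∈ T ∧ (p.2 ≤ j ∧ ¬(p.1 = l ∧ p.2 = j)) := by
    intro p; rw [hA]; exact Finset.mem_filter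
  have hBmem : ∀ p, p ∈ B ↔ p ∈ T ∧ (j ≤ p.1 ∧ ¬(p.1 = j ∧ p.2 = r)) := by
    intro p; rw [hB]; exact Finset.mem_filter
  have hCmem : ∀ p, p ∈ C ↔ (l + 1 < j ∧ p = (l, j)) ∨ (j + 1 < r ∧ p = (j, r)) := by
    intro p; rw [hC]; exact conns_mem p
  have hunion : A ∪ (B ∪ C) = T := by
    ext p
    simp only [Finset.mem_union, hAmem, hBmem, hCmem]
    constructor
    · rintro (⟨hp, _⟩ | ⟨hp, _⟩ | ⟨h, rfl⟩ | ⟨h, rfl⟩)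
      · exact hp
      · exact hp
      · exact hljT h
      · exact hjrT h
    · intro hp
      obtain ⟨q1, q2, q3, q4⟩ := hdiag p hp
      rcases hstr p hp with h | h
      · by_cases he : p.1 = l ∧ p.2 = j
        · refine Or.inr (Or.inr (Or.inl ⟨by omega, Prod.ext he.1 he.2⟩))
        · exact Or.inl ⟨hp, h, he⟩
      · by_cases he : p.1 = j ∧ p.2 = r
        · refine Or.inr (Or.inr (Or.inr ⟨by omega, Prod.ext he.1 he.2⟩))
        · exact Or.inr (Or.inl ⟨hp, h, he⟩)
  have hAdiag : ∀ p ∈ A, IsDiag l j p.1 p.2 := by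
    intro p hp
    rw [hA, Finset.mem_filter] at hp
    obtain ⟨hpT, h1, h2⟩ := hp
    obtain ⟨q1, q2, q3, q4⟩ := hdiag p hpT
    exact ⟨q1, q2, h1, h2⟩
  have hBdiag : ∀ p ∈ B, IsDiag j r p.1 p.2 := by
    intro p hp
    rw [hB, Finset.mem_filter] at hp
    obtain ⟨hpT, h1, h2⟩ := hp
    obtain ⟨q1, q2, q3, q4⟩ := hdiag p hpT
    exact ⟨h1, q2, q3, h2⟩
  have hAnc : ∀ p ∈ A, ∀ q ∈ A, ¬ Crosses p.1 p.2 q.1 q.2 := by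
    intro p hp q hq
    exact hnc p (Finset.mem_of_mem_filter p hp) q (Finset.mem_of_mem_filter q hq)
  have hBnc : ∀ p ∈ B, ∀ q ∈ B, ¬ Crosses p.1 p.2 q.1 q.2 := by
    intro p hp q hq
    exact hnc p (Finset.mem_of_mem_filter p hp) q (Finset.mem_of_mem_filter q hq)
  have hAle := noncross_card_le l j A hAdiag hAnc
  have hBle := noncross_card_le j r B hBdiag hBnc
  have hABdisj : Disjoint A B := by
    rw [Finset.disjoint_left]
    intro p hpA hpB
    rw [hA, Finset.mem_filter] at hpA
    rw [hB, Finset.mem_filter] at hpB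
    obtain ⟨q1, q2, q3, q4⟩ := hdiag p hpA.1
    omega
  have hACdisj : Disjoint A C := by
    rw [Finset.disjoint_left]
    intro p hpA hpC
    rw [hCmem] at hpC
    rw [hA, Finset.mem_filter] at hpA
    rcases hpC with ⟨h, rfl⟩ | ⟨h, rfl⟩ <;> dsimp only at hpA <;> omega
  have hBCdisj : Disjoint B C := by
    rw [Finset.disjoint_left]
    intro p hpB hpC
    rw [hCmem] at hpC
    rw [hB, Finset.mem_filter] at hpB
    rcases hpC with ⟨h, rfl⟩ | ⟨h, rfl⟩ <;> dsimp only at hpB <;> omega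
  have hCcard : C.card = (if l + 1 < j then 1 else 0) + (if j + 1 < r then 1 else 0) := by
    rw [hC]
    by_cases h₁ : l + 1 < j <;> by_cases h₂ : j + 1 < r <;> simp [h₁, h₂]
    rw [Finset.card_insert_of_notMem (by simp; omega)]
    simp
  have hTcard : A.card + (B.card + C.card) = r - l - 2 := by
    have e1 : (B ∪ C).card = B.card + C.card := Finset.card_union_of_disjoint hBCdisj
    have e2 : (A ∪ (B ∪ C)).card = A.card + (B ∪ C).card :=
      Finset.card_union_of_disjoint (Finset.disjoint_union_right.2 ⟨hABdisj, hACdisj⟩)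
    rw [hunion] at e2
    omega
  rw [hCcard] at hTcard
  have hfinal : A.card = j - l - 2 ∧ B.card = r - j - 2 := by
    by_cases h₁ : l + 1 < j <;> by_cases h₂ : j + 1 < r <;>
      simp [h₁, h₂] at hTcard <;> omega
  exact ⟨mem_triangulations.2 ⟨hAdiag, hfinal.1, hAnc⟩,
    mem_triangulations.2 ⟨hBdiag, hfinal.2, hBnc⟩, hunion⟩

set_option maxHeartbeats 1600000 in
lemma glue_mem {l r j : ℕ} {T₁ T₂ U : Finset (ℕ × ℕ)} (hlj : l < j) (hjr : j < r)
    (h1 : T₁ ∈ triangulations l j) (h2 : T₂ ∈ triangulations j r)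
    (hU : U = T₁ ∪ (T₂ ∪ ((if l + 1 < j then {(l, j)} else ∅) ∪
      (if j + 1 < r then {(j, r)} else ∅)))) :
    U ∈ triangulations l r ∧ (j = l + 1 ∨ (l, j) ∈ U) ∧ (r = j + 1 ∨ (j, r) ∈ U) ∧
    U.filter (fun p => p.2 ≤ j ∧ ¬(p.1 = l ∧ p.2 = j)) = T₁ ∧
    U.filter (fun p => j ≤ p.1 ∧ ¬(p.1 = j ∧ p.2 = r)) = T₂ := by
  obtain ⟨hd1, hc1, hn1⟩ := mem_triangulations.1 h1
  obtain ⟨hd2, hc2, hn2⟩ := mem_triangulations.1 h2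
  have hUmem : ∀ p, p ∈ U ↔ p ∈ T₁ ∨ p ∈ T₂ ∨
      (l + 1 < j ∧ p = (l, j)) ∨ (j + 1 < r ∧ p = (j, r)) := by
    intro p
    rw [hU, Finset.mem_union, Finset.mem_union, conns_mem]
  have hb1 : ∀ p ∈ T₁, l ≤ p.1 ∧ p.1 + 2 ≤ p.2 ∧ p.2 ≤ j ∧ ¬(p.1 = l ∧ p.2 = j) :=
    fun p hp => hd1 p hp
  have hb2 : ∀ p ∈ T₂, j ≤ p.1 ∧ p.1 + 2 ≤ p.2 ∧ p.2 ≤ r ∧ ¬(p.1 = j ∧ p.2 = r) :=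
    fun p hp => hd2 p hp
  have hdiag : ∀ p ∈ U, IsDiag l r p.1 p.2 := by
    intro p hp
    rw [hUmem] at hp
    rcases hp with hp | hp | ⟨u, rfl⟩ | ⟨u, rfl⟩
    · have w := hb1 p hp
      exact ⟨by omega, by omega, by omega, by omega⟩
    · have w := hb2 p hp
      exact ⟨by omega, by omega, by omega, by omega⟩
    · have w : IsDiag l r l j := ⟨by omega, by omega, by omega, by omega⟩
      exact w
    · have w : IsDiag l r j r := ⟨by omega, by omega, by omega, by omega⟩
      exact w
  have hnc : ∀ p ∈ U, ∀ q ∈ U, ¬ Crosses p.1 p.2 q.1 q.2 := by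
    intro p hp q hq
    rw [hUmem] at hp hq
    rcases hp with hp | hp | ⟨u₁, rfl⟩ | ⟨u₂, rfl⟩ <;>
      rcases hq with hq | hq | ⟨u₁', rfl⟩ | ⟨u₂', rfl⟩
    all_goals try exact hn1 p hp q hq
    all_goals try exact hn2 p hp q hq
    all_goals try have w1 := hb1 p hp
    all_goals try have w1 := hb2 p hp
    all_goals try have w2 := hb1 q hq
    all_goals try have w2 := hb2 q hq
    all_goals simp only [crosses_iff]
    all_goals try dsimp only
    all_goals omega
  have hT1 : (l, j) ∉ T₁ := fun h => (hb1 _ h).2.2.2 ⟨rfl, rfl⟩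
  have hT2' : (j, r) ∉ T₂ := fun h => (hb2 _ h).2.2.2 ⟨rfl, rfl⟩
  have hT1' : (j, r) ∉ T₁ := by
    intro h
    have w := hb1 _ h
    dsimp only at w
    omega
  have hT2 : (l, j) ∉ T₂ := by
    intro h
    have w := hb2 _ h
    dsimp only at w
    omega
  have hdisj12 : Disjoint T₁ T₂ := by
    rw [Finset.disjoint_left]
    intro p hp1 hp2
    have w1 := hb1 p hp1
    have w2 := hb2 p hp2
    omega
  set C := ((if l + 1 < j then ({(l, j)} : Finset (ℕ × ℕ)) else ∅) ∪
      (if j + 1 < r then {(j, r)} else ∅)) with hCdef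
  have hCmem : ∀ p, p ∈ C ↔ (l + 1 < j ∧ p = (l, j)) ∨ (j + 1 < r ∧ p = (j, r)) :=
    fun p => conns_mem p
  have hd1C : Disjoint T₁ C := by
    rw [Finset.disjoint_left]
    intro p hp1 hpC
    rw [hCmem] at hpC
    rcases hpC with ⟨u, rfl⟩ | ⟨u, rfl⟩
    · exact hT1 hp1
    · exact hT1' hp1
  have hd2C : Disjoint T₂ C := by
    rw [Finset.disjoint_left]
    intro p hp2 hpC
    rw [hCmem] at hpC
    rcases hpC with ⟨u, rfl⟩ | ⟨u, rfl⟩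
    · exact hT2 hp2
    · exact hT2' hp2
  have hCcard : C.card = (if l + 1 < j then 1 else 0) + (if j + 1 < r then 1 else 0) := by
    rw [hCdef]
    by_cases h₁ : l + 1 < j <;> by_cases h₂ : j + 1 < r <;> simp [h₁, h₂]
    rw [Finset.card_insert_of_notMem (by simp; omega)]
    simp
  have hcard : U.card = r - l - 2 := by
    have e1 : (T₂ ∪ C).card = T₂.card + C.card := Finset.card_union_of_disjoint hd2C
    have e2 : U.card = T₁.card + (T₂ ∪ C).card := by
      rw [hU]
      exact Finset.card_union_of_disjoint (Finset.disjoint_union_right.2 ⟨hdisj12, hd1C⟩)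
    rw [e1, hCcard, hc1, hc2] at e2
    rw [e2]
    by_cases h₁ : l + 1 < j <;> by_cases h₂ : j + 1 < r <;> simp [h₁, h₂] <;> omega
  have hmemU : U ∈ triangulations l r := mem_triangulations.2 ⟨hdiag, hcard, hnc⟩
  have hcond1 : j = l + 1 ∨ (l, j) ∈ U := by
    by_cases h₁ : l + 1 < j
    · exact Or.inr ((hUmem _).2 (Or.inr (Or.inr (Or.inl ⟨h₁, rfl⟩))))
    · left; omega
  have hcond2 : r = j + 1 ∨ (j, r) ∈ U := by
    by_cases h₂ : j + 1 < r
    · exact Or.inr ((hUmem _).2 (Or.inr (Or.inr (Or.inr ⟨h₂, rfl⟩))))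
    · left; omega
  have hf1 : U.filter (fun p => p.2 ≤ j ∧ ¬(p.1 = l ∧ p.2 = j)) = T₁ := by
    ext p
    rw [Finset.mem_filter, hUmem]
    constructor
    · rintro ⟨hp | hp | ⟨u, rfl⟩ | ⟨u, rfl⟩, h1, h2⟩
      · exact hp
      · have w := hb2 p hp; omega
      · try dsimp only at h2
        omega
      · try dsimp only at h1
        omega
    · intro hp
      have w := hb1 p hp
      exact ⟨Or.inl hp, by omega, by omega⟩
  have hf2 : U.filter (fun p => j ≤ p.1 ∧ ¬(p.1 = j ∧ p.2 = r)) = T₂ := by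
    ext p
    rw [Finset.mem_filter, hUmem]
    constructor
    · rintro ⟨hp | hp | ⟨u, rfl⟩ | ⟨u, rfl⟩, h1, h2⟩
      · have w := hb1 p hp; omega
      · exact hp
      · try dsimp only at h1
        omega
      · try dsimp only at h2
        omega
    · intro hp
      have w := hb2 p hp
      exact ⟨Or.inr (Or.inl hp), by omega, by omega⟩
  exact ⟨hmemU, hcond1, hcond2, hf1, hf2⟩

lemma card_apex_filter {l r j : ℕ} (hlj : l < j) (hjr : j < r) :
    ((triangulations l r).filter
      (fun T => (j = l + 1 ∨ (l, j) ∈ T) ∧ (r = j + 1 ∨ (j, r) ∈ T))).card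
      = ((triangulations l j) ×ˢ (triangulations j r)).card := by
  refine Finset.card_bij'
    (fun T _ => (T.filter (fun p => p.2 ≤ j ∧ ¬(p.1 = l ∧ p.2 = j)),
                      T.filter (fun p => j ≤ p.1 ∧ ¬(p.1 = j ∧ p.2 = r))))
    (fun P _ => P.1 ∪ (P.2 ∪ ((if l + 1 < j then {(l, j)} else ∅) ∪
      (if j + 1 < r then {(j, r)} else ∅)))) ?_ ?_ ?_ ?_
  · intro T hT
    obtain ⟨hT, ha1, ha2⟩ := Finset.mem_filter.1 hT
    obtain ⟨m1, m2, _⟩ := split_mem hlj hjr hT ha1 ha2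
    simp only [Finset.mem_product]
    exact ⟨m1, m2⟩
  · intro P hP
    simp only [Finset.mem_product] at hP
    obtain ⟨u1, u2, u3, _, _⟩ := glue_mem hlj hjr hP.1 hP.2 rfl
    refine Finset.mem_filter.2 ⟨u1, u2, u3⟩
  · intro T hT
    obtain ⟨hT, ha1, ha2⟩ := Finset.mem_filter.1 hT
    exact (split_mem hlj hjr hT ha1 ha2).2.2
  · intro P hP
    simp only [Finset.mem_product] at hP
    obtain ⟨_, _, _, e1, e2⟩ := glue_mem hlj hjr hP.1 hP.2 rfl
    rw [Prod.ext_iff]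
    exact ⟨e1, e2⟩

lemma card_triangulations : ∀ k l r : ℕ, r = l + 1 + k →
    (triangulations l r).card = catalan k := by
  intro k
  induction k using Nat.strong_induction_on with
  | _ k IH =>
    intro l r hr
    rcases Nat.eq_zero_or_pos k with rfl | hk
    · -- r = l + 1 : the only triangulation is the empty one
      have : triangulations l r = {∅} := by
        ext T
        rw [mem_triangulations]
        simp only [Finset.mem_singleton]
        constructor
        · rintro ⟨_, hcard, _⟩
          rw [← Finset.card_eq_zero]
          omega
        · rintro rfl
          refine ⟨by simp, by simp; omega, by simp⟩
      rw [this]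
      simp [catalan]
    · have hdecomp : triangulations l r = (Finset.Ioo l r).biUnion
          (fun j => (triangulations l r).filter
            (fun T => (j = l + 1 ∨ (l, j) ∈ T) ∧ (r = j + 1 ∨ (j, r) ∈ T))) := by
        ext T
        simp only [Finset.mem_biUnion, Finset.mem_Ioo, Finset.mem_filter]
        constructor
        · intro hT
          obtain ⟨j, h1, h2, h3, h4⟩ := apex_exists hT (by omega)
          exact ⟨j, ⟨h1, h2⟩, hT, h3, h4⟩
        · rintro ⟨j, _, hT, _⟩
          exact hT
      have hdisj : ∀ j ∈ Finset.Ioo l r, ∀ j' ∈ Finset.Ioo l r, j ≠ j' →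
          Disjoint ((triangulations l r).filter
            (fun T => (j = l + 1 ∨ (l, j) ∈ T) ∧ (r = j + 1 ∨ (j, r) ∈ T)))
          ((triangulations l r).filter
            (fun T => (j' = l + 1 ∨ (l, j') ∈ T) ∧ (r = j' + 1 ∨ (j', r) ∈ T))) := by
        have key : ∀ j j', j ∈ Finset.Ioo l r → j' ∈ Finset.Ioo l r → j < j' →
            ∀ T, T ∈ triangulations l r →
            (j = l + 1 ∨ (l, j) ∈ T) ∧ (r = j + 1 ∨ (j, r) ∈ T) →
            (j' = l + 1 ∨ (l, j') ∈ T) ∧ (r = j' + 1 ∨ (j', r) ∈ T) → False := by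
          intro j j' hj hj' hlt T hT hA hA'
          rw [Finset.mem_Ioo] at hj hj'
          obtain ⟨hdiag, hcard, hnc⟩ := mem_triangulations.1 hT
          have hlj' : (l, j') ∈ T := hA'.1.resolve_left (by omega)
          have hjr : (j, r) ∈ T := hA.2.resolve_left (by omega)
          refine hnc (l, j') hlj' (j, r) hjr ?_
          show Crosses l j' j r
          exact Or.inl ⟨by omega, by omega, by omega⟩
        intro j hj j' hj' hne
        rw [Finset.disjoint_left]
        intro T hT hT'
        obtain ⟨h1, h2⟩ := Finset.mem_filter.1 hT
        obtain ⟨h1', h2'⟩ := Finset.mem_filter.1 hT'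
        rcases Nat.lt_or_ge j j' with h | h
        · exact key j j' hj hj' h T h1 h2 h2'
        · exact key j' j hj' hj (by omega) T h1 h2' h2
      rw [hdecomp, Finset.card_biUnion hdisj]
      have hterm : ∀ j ∈ Finset.Ioo l r,
          ((triangulations l r).filter
            (fun T => (j = l + 1 ∨ (l, j) ∈ T) ∧ (r = j + 1 ∨ (j, r) ∈ T))).card
          = catalan (j - l - 1) * catalan (r - j - 1) := by
        intro j hj
        rw [Finset.mem_Ioo] at hj
        rw [card_apex_filter hj.1 hj.2, Finset.card_product]
        rw [IH (j - l - 1) (by omega) l j (by omega),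
          IH (r - j - 1) (by omega) j r (by omega)]
      rw [Finset.sum_congr rfl hterm]
      -- reindex : j = l + 1 + i
      rw [show Finset.Ioo l r = (Finset.range k).image (fun i => l + 1 + i) by
        ext x
        simp only [Finset.mem_Ioo, Finset.mem_image, Finset.mem_range]
        constructor
        · intro h; exact ⟨x - l - 1, by omega, by omega⟩
        · rintro ⟨i, hi, rfl⟩; omega]
      rw [Finset.sum_image (by intro a _ b _ h; dsimp only at h; omega)]
      have : ∀ i ∈ Finset.range k,
          catalan (l + 1 + i - l - 1) * catalan (r - (l + 1 + i) - 1)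
          = catalan i * catalan (k - 1 - i) := by
        intro i hi
        rw [Finset.mem_range] at hi
        congr 1 <;> congr 1 <;> omega
      rw [Finset.sum_congr rfl this]
      have hks : k = (k - 1) + 1 := by omega
      rw [hks, catalan_succ]
      rw [Fin.sum_univ_eq_sum_range (fun i => catalan i * catalan (k - 1 - i))]
      have h2 : k - 1 + 1 - 1 = k - 1 := by omega
      simp only [h2, Nat.succ_eq_add_one]


lemma liftv_delv {v x : ℕ} (hx : x ≠ v) : liftv v (delv v x) = x := by
  unfold liftv delv
  split
  · omega
  · split <;> omega

lemma delv_liftv {v x : ℕ} : delv v (liftv v x) = x := by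
  unfold liftv delv
  split
  · omega
  · split <;> omega

lemma liftv_ne {v x : ℕ} : liftv v x ≠ v := by
  unfold liftv; split <;> omega

lemma liftv_inj {v a b : ℕ} (h : liftv v a = liftv v b) : a = b := by
  unfold liftv at h; split at h <;> split at h <;> omega

lemma crosses_liftv {v a b c d : ℕ} :
    Crosses (liftv v a) (liftv v b) (liftv v c) (liftv v d) ↔ Crosses a b c d := by
  unfold Crosses liftv
  split <;> split <;> split <;> split <;> omega

lemma isDiag_liftv {n v c d : ℕ} (hv : 1 ≤ v) (h : IsDiag 1 (n - 1) c d) (hn : 4 ≤ n) :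
    IsDiag 1 n (liftv v c) (liftv v d) := by
  obtain ⟨h1, h2, h3, h4⟩ := h
  unfold IsDiag liftv
  split <;> split <;> omega

lemma mem_triangles {l r : ℕ} {T : Finset (ℕ × ℕ)} {t : ℕ × ℕ × ℕ} :
    t ∈ triangles l r T ↔ t.1 < r + 1 ∧ t.2.1 < r + 1 ∧ t.2.2 < r + 1 ∧
      t.1 < t.2.1 ∧ t.2.1 < t.2.2 ∧ IsSide l r T t.1 t.2.1 ∧
      IsSide l r T t.2.1 t.2.2 ∧ IsSide l r T t.1 t.2.2 := by
  unfold triangles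
  simp only [Finset.mem_filter, Finset.mem_product, Finset.mem_range]
  tauto

lemma mem_triangles' {l r a b c : ℕ} {T : Finset (ℕ × ℕ)} :
    (a, b, c) ∈ triangles l r T ↔ a < r + 1 ∧ b < r + 1 ∧ c < r + 1 ∧
      a < b ∧ b < c ∧ IsSide l r T a b ∧ IsSide l r T b c ∧ IsSide l r T a c :=
  mem_triangles

noncomputable def earDg (n k : ℕ) : ℕ × ℕ :=
  if k ≤ n - 2 then (k, k + 2) else if k = n - 1 then (2, n) else (1, n - 1)

noncomputable def earTri (n k : ℕ) : ℕ × ℕ × ℕ :=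
  if k ≤ n - 2 then (k, k + 1, k + 2) else if k = n - 1 then (1, 2, n) else (1, n - 1, n)

lemma earCount_eq {n : ℕ} (hn : 4 ≤ n) {T : Finset (ℕ × ℕ)} (hT : T ∈ triangulations 1 n) :
    earCount n T = ((Finset.Icc 1 n).filter (fun k => earDg n k ∈ T)).card := by
  obtain ⟨hdiag, hcard, hnc⟩ := mem_triangulations.1 hT
  unfold earCount
  have hset : (triangles 1 n T).filter (fun t => 2 ≤ edgeCount 1 n t.1 t.2.1 t.2.2)
      = ((Finset.Icc 1 n).filter (fun k => earDg n k ∈ T)).image (earTri n) := by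
    ext t
    constructor
    · intro ht
      rw [Finset.mem_filter] at ht
      obtain ⟨htr, hec⟩ := ht
      rw [mem_triangles] at htr
      obtain ⟨hr1, hr2, hr3, hab, hbc, hs1, hs2, hs3⟩ := htr
      have hTd : ∀ x y, (x, y) ∈ T → 1 ≤ x ∧ x + 2 ≤ y ∧ y ≤ n ∧ ¬(x = 1 ∧ y = n) :=
        fun x y h => hdiag (x, y) h
      have ha1 : 1 ≤ t.1 := by
        rcases hs1 with h | h
        · rcases h with ⟨h, _⟩ | ⟨h, _⟩ <;> omega
        · exact (hTd _ _ h).1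
      have hcn : t.2.2 ≤ n := by
        rcases hs2 with h | h
        · rcases h with ⟨_, _, h⟩ | ⟨_, h⟩ <;> omega
        · exact (hTd _ _ h).2.2.1
      unfold edgeCount at hec
      simp only [Finset.mem_image, Finset.mem_filter, Finset.mem_Icc]
      by_cases e1 : IsEdge 1 n t.1 t.2.1 <;> by_cases e2 : IsEdge 1 n t.2.1 t.2.2 <;>
        by_cases e3 : IsEdge 1 n t.1 t.2.2 <;> simp [e1, e2, e3] at hec
      -- case TTT : impossible
      · rcases e1 with ⟨u1, u2, u3⟩ | ⟨u1, u2⟩ <;> rcases e2 with ⟨v1, v2, v3⟩ | ⟨v1, v2⟩ <;>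
          rcases e3 with ⟨w1, w2, w3⟩ | ⟨w1, w2⟩ <;> exfalso <;> omega
      -- case TTF : consecutive triple
      · rcases e1 with ⟨u1, u2, u3⟩ | ⟨u1, u2⟩
        · rcases e2 with ⟨v1, v2, v3⟩ | ⟨v1, v2⟩
          · have hmem3 : (t.1, t.2.2) ∈ T := hs3.resolve_left e3
            refine ⟨t.1, ⟨⟨ha1, by omega⟩, ?_⟩, ?_⟩
            · unfold earDg
              rw [if_pos (by omega : t.1 ≤ n - 2)]
              rw [show t.1 + 2 = t.2.2 from by omega]
              exact hmem3
            · unfold earTri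
              rw [if_pos (by omega : t.1 ≤ n - 2)]
              simp only [Prod.ext_iff]
              exact ⟨trivial, by omega, by omega⟩
          · exfalso; omega
        · exfalso; omega
      -- case TFT : triangle (1, 2, n)
      · rcases e1 with ⟨u1, u2, u3⟩ | ⟨u1, u2⟩
        · rcases e3 with ⟨w1, w2, w3⟩ | ⟨w1, w2⟩
          · exfalso; omega
          · have hmem2 : (t.2.1, t.2.2) ∈ T := hs2.resolve_left e2
            refine ⟨n - 1, ⟨⟨by omega, by omega⟩, ?_⟩, ?_⟩
            · unfold earDg
              rw [if_neg (by omega), if_pos rfl]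
              rw [show (2 : ℕ) = t.2.1 from by omega, show n = t.2.2 from by omega]
              exact hmem2
            · unfold earTri
              rw [if_neg (by omega), if_pos rfl]
              simp only [Prod.ext_iff]
              exact ⟨by omega, by omega, by omega⟩
        · exfalso; omega
      -- case FTT : triangle (1, n-1, n)
      · rcases e2 with ⟨v1, v2, v3⟩ | ⟨v1, v2⟩
        · rcases e3 with ⟨w1, w2, w3⟩ | ⟨w1, w2⟩
          · exfalso; omega
          · have hmem1 : (t.1, t.2.1) ∈ T := hs1.resolve_left e1
            refine ⟨n, ⟨⟨by omega, le_refl n⟩, ?_⟩, ?_⟩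
            · unfold earDg
              rw [if_neg (by omega), if_neg (by omega)]
              rw [show n - 1 = t.2.1 from by omega, show (1 : ℕ) = t.1 from by omega]
              exact hmem1
            · unfold earTri
              rw [if_neg (by omega), if_neg (by omega)]
              simp only [Prod.ext_iff]
              exact ⟨by omega, by omega, by omega⟩
        · exfalso; omega
    · intro ht
      rw [Finset.mem_image] at ht
      obtain ⟨k, hk, rfl⟩ := ht
      rw [Finset.mem_filter, Finset.mem_Icc] at hk
      obtain ⟨⟨hk1, hk2⟩, hkT⟩ := hk
      rw [Finset.mem_filter]
      by_cases hk : k ≤ n - 2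
      · unfold earDg at hkT
        rw [if_pos hk] at hkT
        obtain ⟨q1, q2, q3, q4⟩ := hdiag _ hkT
        have he1 : IsEdge 1 n k (k + 1) := Or.inl ⟨hk1, rfl, by omega⟩
        have he2 : IsEdge 1 n (k + 1) (k + 2) := Or.inl ⟨by omega, rfl, by omega⟩
        unfold earTri
        rw [if_pos hk]
        constructor
        · rw [mem_triangles']
          exact ⟨by omega, by omega, by omega, by omega, by omega,
            Or.inl he1, Or.inl he2, Or.inr hkT⟩
        · show 2 ≤ edgeCount 1 n k (k + 1) (k + 2)
          unfold edgeCount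
          rw [if_pos he1, if_pos he2]
          split <;> omega
      · by_cases hk' : k = n - 1
        · unfold earDg at hkT
          rw [if_neg hk, if_pos hk'] at hkT
          have he1 : IsEdge 1 n 1 2 := Or.inl ⟨le_refl 1, rfl, by omega⟩
          have he3 : IsEdge 1 n 1 n := Or.inr ⟨rfl, rfl⟩
          unfold earTri
          rw [if_neg hk, if_pos hk']
          constructor
          · rw [mem_triangles']
            exact ⟨by omega, by omega, by omega, by omega, by omega,
              Or.inl he1, Or.inr hkT, Or.inl he3⟩
          · show 2 ≤ edgeCount 1 n 1 2 n
            unfold edgeCount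
            rw [if_pos he1, if_pos he3]
            split <;> omega
        · unfold earDg at hkT
          rw [if_neg hk, if_neg hk'] at hkT
          have he2 : IsEdge 1 n (n - 1) n := Or.inl ⟨by omega, by omega, le_refl n⟩
          have he3 : IsEdge 1 n 1 n := Or.inr ⟨rfl, rfl⟩
          unfold earTri
          rw [if_neg hk, if_neg hk']
          constructor
          · rw [mem_triangles']
            exact ⟨by omega, by omega, by omega, by omega, by omega,
              Or.inr hkT, Or.inl he2, Or.inl he3⟩
          · show 2 ≤ edgeCount 1 n 1 (n - 1) n
            unfold edgeCount
            rw [if_pos he2, if_pos he3]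
            split <;> omega
  rw [hset]
  apply Finset.card_image_of_injOn
  have hrec : ∀ k, 1 ≤ k → k ≤ n →
      (fun t : ℕ × ℕ × ℕ => if t.2.2 = t.1 + 2 then t.1 else if t.2.1 = 2 then n - 1 else n)
        (earTri n k) = k := by
    intro k hk1 hk2
    unfold earTri
    by_cases h : k ≤ n - 2
    · rw [if_pos h]; dsimp only; rw [if_pos rfl]
    · by_cases h2 : k = n - 1
      · rw [if_neg h, if_pos h2]; dsimp only; rw [if_neg (by omega), if_pos rfl]; omega
      · rw [if_neg h, if_neg h2]; dsimp only; rw [if_neg (by omega), if_neg (by omega)]; omega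
  intro k hk k' hk' heq
  simp only [Finset.coe_filter, Set.mem_setOf_eq, Finset.mem_Icc] at hk hk'
  have w1 := hrec k hk.1.1 hk.1.2
  have w2 := hrec k' hk'.1.1 hk'.1.2
  rw [heq] at w1
  rw [w2] at w1
  exact w1.symm

lemma card_filter_2n (n : ℕ) (hn : 4 ≤ n) :
    ((triangulations 1 n).filter (fun T => (2, n) ∈ T)).card = catalan (n - 3) := by
  rw [← card_triangulations (n - 3) 2 n (by omega)]
  refine Finset.card_bij' (fun T _ => T.erase (2, n)) (fun S _ => insert (2, n) S) ?_ ?_ ?_ ?_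
  · intro T hT'
    obtain ⟨hT, hmem⟩ := Finset.mem_filter.1 hT'
    obtain ⟨hdiag, hcard, hnc⟩ := mem_triangulations.1 hT
    refine mem_triangulations.2 ⟨?_, ?_, ?_⟩
    · intro p hp
      have hpT := Finset.mem_of_mem_erase hp
      have hpne := Finset.ne_of_mem_erase hp
      obtain ⟨q1, q2, q3, q4⟩ := hdiag p hpT
      have h2 : 2 ≤ p.1 := by
        by_contra hcon
        refine hnc (2, n) hmem p hpT ?_
        show Crosses 2 n p.1 p.2
        refine Or.inr ⟨by omega, by omega, ?_⟩
        rcases Nat.lt_or_ge p.2 n with h | h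
        · exact h
        · exfalso; omega
      exact ⟨h2, q2, q3, fun hcon => hpne (Prod.ext hcon.1 hcon.2)⟩
    · rw [Finset.card_erase_of_mem hmem, hcard]
      omega
    · intro p hp q hq
      exact hnc p (Finset.mem_of_mem_erase hp) q (Finset.mem_of_mem_erase hq)
  · intro S hS
    obtain ⟨hdiag, hcard, hnc⟩ := mem_triangulations.1 hS
    have h2n : (2, n) ∉ S := fun h => ((hdiag _ h).2.2.2) ⟨rfl, rfl⟩
    refine Finset.mem_filter.2 ⟨mem_triangulations.2 ⟨?_, ?_, ?_⟩, Finset.mem_insert_self _ _⟩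
    · intro p hp
      rcases Finset.mem_insert.1 hp with rfl | hp
    

      · have w : IsDiag 1 n 2 n := ⟨by omega, by omega, le_refl _, by omega⟩
        exact w
      · obtain ⟨q1, q2, q3, q4⟩ := hdiag p hp
        exact ⟨by omega, q2, q3, by omega⟩
    · rw [Finset.card_insert_of_notMem h2n, hcard]
      omega
    · intro p hp q hq
      rcases Finset.mem_insert.1 hp with rfl | hp <;> rcases Finset.mem_insert.1 hq with rfl | hq
      · show ¬ Crosses 2 n 2 n
        rw [crosses_iff]; omega
      · obtain ⟨q1, q2, q3, q4⟩ := hdiag q hq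
        show ¬ Crosses 2 n q.1 q.2
        rw [crosses_iff]; omega
      · obtain ⟨q1, q2, q3, q4⟩ := hdiag p hp
        show ¬ Crosses p.1 p.2 2 n
        rw [crosses_iff]; omega
      · exact hnc p hp q hq
  · intro T hT'
    exact Finset.insert_erase (Finset.mem_filter.1 hT').2
  · intro S hS
    obtain ⟨hdiag, _, _⟩ := mem_triangulations.1 hS
    exact Finset.erase_insert (fun h => ((hdiag _ h).2.2.2) ⟨rfl, rfl⟩)

lemma card_filter_1n1 (n : ℕ) (hn : 4 ≤ n) :
    ((triangulations 1 n).filter (fun T => (1, n - 1) ∈ T)).card = catalan (n - 3) := by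
  rw [← card_triangulations (n - 3) 1 (n - 1) (by omega)]
  refine Finset.card_bij' (fun T _ => T.erase (1, n - 1)) (fun S _ => insert (1, n - 1) S) ?_ ?_ ?_ ?_
  · intro T hT'
    obtain ⟨hT, hmem⟩ := Finset.mem_filter.1 hT'
    obtain ⟨hdiag, hcard, hnc⟩ := mem_triangulations.1 hT
    refine mem_triangulations.2 ⟨?_, ?_, ?_⟩
    · intro p hp
      have hpT := Finset.mem_of_mem_erase hp
      have hpne := Finset.ne_of_mem_erase hp
      obtain ⟨q1, q2, q3, q4⟩ := hdiag p hpT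
      have h2 : p.2 ≤ n - 1 := by
        by_contra hcon
        refine hnc (1, n - 1) hmem p hpT ?_
        show Crosses 1 (n - 1) p.1 p.2
        exact Or.inl ⟨by omega, by omega, by omega⟩
      exact ⟨q1, q2, h2, fun hcon => hpne (Prod.ext hcon.1 hcon.2)⟩
    · rw [Finset.card_erase_of_mem hmem, hcard]
      omega
    · intro p hp q hq
      exact hnc p (Finset.mem_of_mem_erase hp) q (Finset.mem_of_mem_erase hq)
  · intro S hS
    obtain ⟨hdiag, hcard, hnc⟩ := mem_triangulations.1 hS
    have h2n : (1, n - 1) ∉ S := fun h => ((hdiag _ h).2.2.2) ⟨rfl, rfl⟩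
    refine Finset.mem_filter.2 ⟨mem_triangulations.2 ⟨?_, ?_, ?_⟩, Finset.mem_insert_self _ _⟩
    · intro p hp
      rcases Finset.mem_insert.1 hp with rfl | hp
      · have w : IsDiag 1 n 1 (n - 1) := ⟨le_refl _, by omega, by omega, by omega⟩
        exact w
      · obtain ⟨q1, q2, q3, q4⟩ := hdiag p hp
        exact ⟨q1, q2, by omega, by omega⟩
    · rw [Finset.card_insert_of_notMem h2n, hcard]
      omega
    · intro p hp q hq
      rcases Finset.mem_insert.1 hp with rfl | hp <;> rcases Finset.mem_insert.1 hq with rfl | hq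
      · show ¬ Crosses 1 (n - 1) 1 (n - 1)
        rw [crosses_iff]; omega
      · obtain ⟨q1, q2, q3, q4⟩ := hdiag q hq
        show ¬ Crosses 1 (n - 1) q.1 q.2
        rw [crosses_iff]; omega
      · obtain ⟨q1, q2, q3, q4⟩ := hdiag p hp
        show ¬ Crosses p.1 p.2 1 (n - 1)
        rw [crosses_iff]; omega
      · exact hnc p hp q hq
  · intro T hT'
    exact Finset.insert_erase (Finset.mem_filter.1 hT').2
  · intro S hS
    obtain ⟨hdiag, _, _⟩ := mem_triangulations.1 hS
    exact Finset.erase_insert (fun h => ((hdiag _ h).2.2.2) ⟨rfl, rfl⟩)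

lemma erase_avoid {n a : ℕ} {T : Finset (ℕ × ℕ)} (hT : T ∈ triangulations 1 n)
    (hmem : (a, a + 2) ∈ T) :
    ∀ p ∈ T.erase (a, a + 2), p.1 ≠ a + 1 ∧ p.2 ≠ a + 1 := by
  obtain ⟨hdiag, hcard, hnc⟩ := mem_triangulations.1 hT
  intro p hp
  have hpT := Finset.mem_of_mem_erase hp
  have hpne := Finset.ne_of_mem_erase hp
  obtain ⟨q1, q2, q3, q4⟩ := hdiag p hpT
  constructor
  · intro h
    refine hnc (a, a + 2) hmem p hpT ?_
    show Crosses a (a + 2) p.1 p.2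
    exact Or.inl ⟨by omega, by omega, by omega⟩
  · intro h
    refine hnc p hpT (a, a + 2) hmem ?_
    show Crosses p.1 p.2 a (a + 2)
    exact Or.inl ⟨by omega, by omega, by omega⟩

lemma lift_notmem {n a : ℕ} {S : Finset (ℕ × ℕ)} (hS : S ∈ triangulations 1 (n - 1)) :
    (a, a + 2) ∉ S.image (fun p => (liftv (a + 1) p.1, liftv (a + 1) p.2)) := by
  obtain ⟨hdiag, _, _⟩ := mem_triangulations.1 hS
  intro h
  obtain ⟨q, hq, heq⟩ := Finset.mem_image.1 h
  obtain ⟨q1, q2, q3, q4⟩ := hdiag q hq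
  have e1 : liftv (a + 1) q.1 = a := congrArg Prod.fst heq
  have e2 : liftv (a + 1) q.2 = a + 2 := congrArg Prod.snd heq
  unfold liftv at e1 e2
  split at e1 <;> split at e2 <;> omega

lemma card_filter_diag (n a : ℕ) (hn : 4 ≤ n) (ha1 : 1 ≤ a) (ha2 : a ≤ n - 2) :
    ((triangulations 1 n).filter (fun T => (a, a + 2) ∈ T)).card = catalan (n - 3) := by
  rw [← card_triangulations (n - 3) 1 (n - 1) (by omega)]
  refine Finset.card_bij'
    (fun T _ => (T.erase (a, a + 2)).image (fun p => (delv (a + 1) p.1, delv (a + 1) p.2)))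
    (fun S _ => insert (a, a + 2) (S.image (fun p => (liftv (a + 1) p.1, liftv (a + 1) p.2))))
    ?_ ?_ ?_ ?_
  · intro T hT'
    obtain ⟨hT, hmem⟩ := Finset.mem_filter.1 hT'
    obtain ⟨hdiag, hcard, hnc⟩ := mem_triangulations.1 hT
    have hav := erase_avoid hT hmem
    have hgap : ∀ p ∈ T.erase (a, a + 2), ¬(p.1 < a + 1 ∧ a + 1 < p.2 ∧ p.2 = p.1 + 2) := by
      intro p hp hcon
      exact (Finset.ne_of_mem_erase hp) (Prod.ext (by omega) (by omega))
    refine mem_triangulations.2 ⟨?_, ?_, ?_⟩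
    · intro p hp
      obtain ⟨q, hq, rfl⟩ := Finset.mem_image.1 hp
      exact isDiag_delv (by omega) (by omega) (hdiag q (Finset.mem_of_mem_erase hq))
        (hav q hq).1 (hav q hq).2 (hgap q hq)
    · rw [Finset.card_image_of_injOn, Finset.card_erase_of_mem hmem, hcard]
      · omega
      · intro p hp q hq hpq
        have h1 := hav p hp
        have h2 := hav q hq
        exact Prod.ext (delv_inj h1.1 h2.1 (congrArg Prod.fst hpq))
          (delv_inj h1.2 h2.2 (congrArg Prod.snd hpq))
    · intro p hp q hq
      obtain ⟨p', hp', rfl⟩ := Finset.mem_image.1 hp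
      obtain ⟨q', hq', rfl⟩ := Finset.mem_image.1 hq
      rw [crosses_delv (hav p' hp').1 (hav p' hp').2 (hav q' hq').1 (hav q' hq').2]
      exact hnc p' (Finset.mem_of_mem_erase hp') q' (Finset.mem_of_mem_erase hq')
  · intro S hS
    obtain ⟨hdiag, hcard, hnc⟩ := mem_triangulations.1 hS
    have hnotmem := lift_notmem (a := a) hS
    refine Finset.mem_filter.2 ⟨mem_triangulations.2 ⟨?_, ?_, ?_⟩, Finset.mem_insert_self _ _⟩
    · intro p hp
      rcases Finset.mem_insert.1 hp with rfl | hp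
      · have w : IsDiag 1 n a (a + 2) := ⟨ha1, by omega, by omega, by omega⟩
        exact w
      · obtain ⟨q, hq, rfl⟩ := Finset.mem_image.1 hp
        exact isDiag_liftv (by omega) (hdiag q hq) hn
    · rw [Finset.card_insert_of_notMem hnotmem, Finset.card_image_of_injOn, hcard]
      · omega
      · intro p _ q _ hpq
        exact Prod.ext (liftv_inj (congrArg Prod.fst hpq)) (liftv_inj (congrArg Prod.snd hpq))
    · intro p hp q hq
      rcases Finset.mem_insert.1 hp with rfl | hp <;> rcases Finset.mem_insert.1 hq with rfl | hq
      · show ¬ Crosses a (a + 2) a (a + 2)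
        rw [crosses_iff]; omega
      · obtain ⟨q', hq', rfl⟩ := Finset.mem_image.1 hq
        show ¬ Crosses a (a + 2) (liftv (a + 1) q'.1) (liftv (a + 1) q'.2)
        have w1 : liftv (a + 1) q'.1 ≠ a + 1 := liftv_ne
        have w2 : liftv (a + 1) q'.2 ≠ a + 1 := liftv_ne
        rw [crosses_iff]; omega
      · obtain ⟨p', hp', rfl⟩ := Finset.mem_image.1 hp
        show ¬ Crosses (liftv (a + 1) p'.1) (liftv (a + 1) p'.2) a (a + 2)
        have w1 : liftv (a + 1) p'.1 ≠ a + 1 := liftv_ne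
        have w2 : liftv (a + 1) p'.2 ≠ a + 1 := liftv_ne
        rw [crosses_iff]; omega
      · obtain ⟨p', hp', rfl⟩ := Finset.mem_image.1 hp
        obtain ⟨q', hq', rfl⟩ := Finset.mem_image.1 hq
        rw [crosses_liftv]
        exact hnc p' hp' q' hq'
  · intro T hT'
    obtain ⟨hT, hmem⟩ := Finset.mem_filter.1 hT'
    have hav := erase_avoid hT hmem
    rw [Finset.image_image]
    have heq : Set.EqOn ((fun p : ℕ × ℕ => (liftv (a + 1) p.1, liftv (a + 1) p.2)) ∘
        (fun p : ℕ × ℕ => (delv (a + 1) p.1, delv (a + 1) p.2))) id ↑(T.erase (a, a + 2)) := by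
      intro p hp
      rw [Finset.mem_coe] at hp
      have h := hav p hp
      simp only [Function.comp_apply, id_eq]
      rw [liftv_delv h.1, liftv_delv h.2]
    rw [Finset.image_congr heq, Finset.image_id, Finset.insert_erase hmem]
  · intro S hS
    have hnotmem := lift_notmem (a := a) hS
    rw [Finset.erase_insert hnotmem, Finset.image_image]
    have heq : Set.EqOn ((fun p : ℕ × ℕ => (delv (a + 1) p.1, delv (a + 1) p.2)) ∘
        (fun p : ℕ × ℕ => (liftv (a + 1) p.1, liftv (a + 1) p.2))) id ↑S := by
      intro p hp
      simp only [Function.comp_apply, id_eq]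
      rw [delv_liftv, delv_liftv]
    rw [Finset.image_congr heq, Finset.image_id]

lemma sum_earCount (n : ℕ) (hn : 4 ≤ n) :
    ∑ T ∈ triangulations 1 n, earCount n T = n * catalan (n - 3) := by
  rw [Finset.sum_congr rfl (fun T hT => earCount_eq hn hT)]
  rw [Finset.sum_congr rfl (fun T _ => Finset.card_filter _ _)]
  rw [Finset.sum_comm]
  have h3 : ∀ k ∈ Finset.Icc 1 n,
      (∑ T ∈ triangulations 1 n, if earDg n k ∈ T then 1 else 0) = catalan (n - 3) := by
    intro k hk
    rw [Finset.mem_Icc] at hk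
    rw [← Finset.card_filter]
    by_cases h : k ≤ n - 2
    · have he : earDg n k = (k, k + 2) := by unfold earDg; rw [if_pos h]
      simp only [he]
      exact card_filter_diag n k hn hk.1 h
    · by_cases h2 : k = n - 1
      · have he : earDg n k = (2, n) := by unfold earDg; rw [if_neg h, if_pos h2]
        simp only [he]
        exact card_filter_2n n hn
      · have he : earDg n k = (1, n - 1) := by unfold earDg; rw [if_neg h, if_neg h2]
        simp only [he]
        exact card_filter_1n1 n hn
  rw [Finset.sum_congr rfl h3, Finset.sum_const, Nat.card_Icc, smul_eq_mul]
  rw [show n + 1 - 1 = n from by omega]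

/-- the expected number of ears is `n(n-1)/(2(2n-5))` (Lemma 4(II)). -/
theorem ear_expectation (n : ℕ) (hn : 4 ≤ n) :
    2 * (2 * n - 5) * ∑ T ∈ triangulations 1 n, earCount n T =
      n * (n - 1) * catalan (n - 2) := by
  rw [sum_earCount n hn]
  obtain ⟨m, rfl⟩ : ∃ m, n = m + 4 := ⟨n - 4, by omega⟩
  have key : (m + 3) * catalan (m + 2) = 2 * (2 * m + 3) * catalan (m + 1) := by
    have h1 := succ_mul_catalan_eq_centralBinom (m + 2)
    have h2 := Nat.succ_mul_centralBinom_succ (m + 1)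
    have h3 := succ_mul_catalan_eq_centralBinom (m + 1)
    rw [show m + 2 + 1 = m + 3 from by omega] at h1
    rw [show m + 1 + 1 = m + 2 from by omega, show 2 * (m + 1) + 1 = 2 * m + 3 from by omega] at h2
    rw [show m + 1 + 1 = m + 2 from by omega] at h3
    have h4 : (m + 2) * ((m + 3) * catalan (m + 2)) =
        (m + 2) * (2 * (2 * m + 3) * catalan (m + 1)) := by
      calc (m + 2) * ((m + 3) * catalan (m + 2)) = (m + 2) * Nat.centralBinom (m + 2) := by
            rw [h1]
        _ = 2 * (2 * m + 3) * Nat.centralBinom (m + 1) := h2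
        _ = 2 * (2 * m + 3) * ((m + 2) * catalan (m + 1)) := by rw [h3]
        _ = (m + 2) * (2 * (2 * m + 3) * catalan (m + 1)) := by ring
    exact Nat.eq_of_mul_eq_mul_left (by omega) h4
  rw [show 2 * (m + 4) - 5 = 2 * m + 3 from by omega, show m + 4 - 1 = m + 3 from by omega,
    show m + 4 - 2 = m + 2 from by omega, show m + 4 - 3 = m + 1 from by omega]
  calc 2 * (2 * m + 3) * ((m + 4) * catalan (m + 1))
      = (m + 4) * (2 * (2 * m + 3) * catalan (m + 1)) := by ring
    _ = (m + 4) * ((m + 3) * catalan (m + 2)) := by rw [key]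
    _ = (m + 4) * (m + 3) * catalan (m + 2) := by ring
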